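/- For two agents whose true valuations are unary additive (over any number m of goods), Standard-E-C-E always has a pure Nash equilibrium whose induced allocation is EF1 with respect to the true valuations. -/

import Mathlib

/-!
Formalization of the strategic Envy-Cycle-Elimination (E-C-E) setting.

There are `n` agents and `m` goods (`Fin m`), with the predefined ordering of agents
and goods given by the orders on `Fin n` and `Fin m`.  A bid consists of a reported
additive valuation (a nonnegative value for every good) together with a preference
list (a permutation of the goods).  E-C-E starts from empty bundles and, while
unallocated goods remain, selects a source of the envy graph (according to the rule of
the respective variant), adds one unallocated good to that agent's bundle (again
according to the rule of the respective variant), and then repeatedly eliminates envy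
cycles, in a fixed order, until the envy graph has a source.
-/

open scoped Classical
open Finset

/-- A bid of an agent: a reported additive valuation (a nonnegative value for every
good) together with a preference list, a permutation of the goods. -/
structure Bid (m : ℕ) where
  val : Fin m → ℝ
  nonneg : ∀ g, 0 ≤ val g
  pref : Equiv.Perm (Fin m)

namespace ECE

variable {n m : ℕ}

/-- Reported (additive) value of a bundle. -/
noncomputable def bval (b : Bid m) (S : Finset (Fin m)) : ℝ := ∑ g ∈ S, b.val g

/-- (True, additive) value of a bundle under the valuation `v`. -/
noncomputable def value (v : Fin m → ℝ) (S : Finset (Fin m)) : ℝ := ∑ g ∈ S, v g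

/-- Envy-graph edge: agent `i` envies agent `j` (w.r.t. the reported valuations) under
the partial allocation `P`. -/
def envies (b : Fin n → Bid m) (P : Fin n → Finset (Fin m)) (i j : Fin n) : Prop :=
  bval (b i) (P i) < bval (b i) (P j)

/-- The sources (vertices of in-degree 0) of the envy graph. -/
noncomputable def sources (b : Fin n → Bid m) (P : Fin n → Finset (Fin m)) :
    Finset (Fin n) :=
  univ.filter fun i => ∀ j, ¬ envies b P j i

/-- The envy cycles of the current envy graph, represented as cyclic permutations `σ`
of the agents such that every agent moved by `σ` envies her image under `σ`. -/
noncomputable def cycleSet (b : Fin n → Bid m) (P : Fin n → Finset (Fin m)) :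
    Finset (Equiv.Perm (Fin n)) :=
  univ.filter fun σ => σ.IsCycle ∧ ∀ i, σ i ≠ i → envies b P i (σ i)

/-- A fixed enumeration of the permutations of the agents, providing the fixed
(lexicographic) order in which envy cycles are eliminated. -/
noncomputable def permIdx (n : ℕ) :
    Equiv.Perm (Fin n) ≃ Fin (Fintype.card (Equiv.Perm (Fin n))) :=
  Fintype.equivFin _

/-- Eliminate one envy cycle (the first one in the fixed order): every agent on the
cycle receives the bundle of the agent she envies. -/
noncomputable def elimOnce (b : Fin n → Bid m) (P : Fin n → Finset (Fin m)) :
    Fin n → Finset (Fin m) :=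
  if h : (cycleSet b P).Nonempty then
    let σ := (permIdx n).symm (((cycleSet b P).image (permIdx n)).min' (h.image _))
    fun i => P (σ i)
  else P

/-- Repeatedly eliminate envy cycles until the envy graph has a source. -/
noncomputable def resolve (b : Fin n → Bid m) :
    ℕ → (Fin n → Finset (Fin m)) → Fin n → Finset (Fin m)
  | 0, P => P
  | fuel + 1, P => if (sources b P).Nonempty then P else resolve b fuel (elimOnce b P)

/-- The state (current partial allocation, remaining unallocated goods) of an E-C-E
run after a given number of steps.  In each step, if unallocated goods remain, the
agent chosen by `pickAgent` (a source of the envy graph) receives the good chosen by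
`pickItem`, and afterwards envy cycles are eliminated until the graph has a source. -/
noncomputable def stateECE (b : Fin n → Bid m)
    (pickAgent : (Fin n → Finset (Fin m)) → Option (Fin n))
    (pickItem : Fin n → (R : Finset (Fin m)) → R.Nonempty → Fin m) :
    ℕ → (Fin n → Finset (Fin m)) × Finset (Fin m)
  | 0 => (fun _ => ∅, univ)
  | k + 1 =>
    let s := stateECE b pickAgent pickItem k
    if hR : s.2.Nonempty then
      match pickAgent s.1 with
      | none => s
      | some i =>
        let g := pickItem i s.2 hR
        (resolve b (n * n + 1) (fun j => if j = i then insert g (s.1 j) else s.1 j),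
          s.2.erase g)
    else s

/-- Source selection of Standard-E-C-E: among multiple sources, the agent earliest in
the predefined ordering of the agents. -/
noncomputable def stdAgent (b : Fin n → Bid m) (P : Fin n → Finset (Fin m)) :
    Option (Fin n) :=
  if h : (sources b P).Nonempty then some ((sources b P).min' h) else none

/-- Source selection of the Priority variants: among multiple sources, those having at
least one outgoing envy edge have priority, ties broken by the predefined ordering of
the agents. -/
noncomputable def priAgent (b : Fin n → Bid m) (P : Fin n → Finset (Fin m)) :
    Option (Fin n) :=
  if h' : ((sources b P).filter fun i => ∃ j, envies b P i j).Nonempty then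
    some (((sources b P).filter fun i => ∃ j, envies b P i j).min' h')
  else if h : (sources b P).Nonempty then some ((sources b P).min' h) else none

/-- The unallocated good of highest reported value, ties broken by the predefined
ordering of the goods. -/
noncomputable def bestItem (v : Fin m → ℝ) (R : Finset (Fin m)) (hR : R.Nonempty) :
    Fin m :=
  (R.filter fun g => ∀ g' ∈ R, v g' ≤ v g).min' (by
    obtain ⟨g, hg, hmax⟩ := R.exists_max_image v hR
    exact ⟨g, mem_filter.2 ⟨hg, hmax⟩⟩)

/-- The earliest unallocated good in the preference list `pref`. -/
noncomputable def preferredItem (pref : Equiv.Perm (Fin m)) (R : Finset (Fin m))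
    (hR : R.Nonempty) : Fin m :=
  pref.symm ((R.image pref).min' (hR.image _))

/-- Standard-E-C-E: sources chosen by the predefined agent ordering, goods assigned in
the predefined ordering of the goods. -/
noncomputable def Standard (b : Fin n → Bid m) : Fin n → Finset (Fin m) :=
  (stateECE b (stdAgent b) (fun _ R hR => R.min' hR) m).1

/-- Priority-E-C-E: envious sources have priority (ties broken by the agent ordering),
goods assigned in the predefined ordering of the goods. -/
noncomputable def Priority (b : Fin n → Bid m) : Fin n → Finset (Fin m) :=
  (stateECE b (priAgent b) (fun _ R hR => R.min' hR) m).1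

/-- Best-Item-E-C-E: envious sources have priority, and the chosen agent receives her
unallocated good of highest reported value (ties broken by the good ordering). -/
noncomputable def BestItemECE (b : Fin n → Bid m) : Fin n → Finset (Fin m) :=
  (stateECE b (priAgent b) (fun i R hR => bestItem (b i).val R hR) m).1

/-- Preferred-Item-E-C-E: envious sources have priority, and the chosen agent receives
the earliest unallocated good in her preference list. -/
noncomputable def PreferredItemECE (b : Fin n → Bid m) : Fin n → Finset (Fin m) :=
  (stateECE b (priAgent b) (fun i R hR => preferredItem (b i).pref R hR) m).1

/-- The allocation `A` is `α`-EF1 from agent `i`'s perspective w.r.t. the valuation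
`v`: for every agent `j` with nonempty bundle there is a good `g ∈ A j` with
`v (A i) ≥ α · v (A j \ {g})`. -/
def EF1From (α : ℝ) (v : Fin m → ℝ) (A : Fin n → Finset (Fin m)) (i : Fin n) : Prop :=
  ∀ j : Fin n, (A j).Nonempty → ∃ g ∈ A j, α * value v ((A j).erase g) ≤ value v (A i)

/-- The allocation `A` is EF1 w.r.t. the valuations `v`. -/
def IsEF1 (v : Fin n → Fin m → ℝ) (A : Fin n → Finset (Fin m)) : Prop :=
  ∀ i : Fin n, EF1From 1 (v i) A i

/-- Agent `i`'s bid in the profile `b` is a best response to the others' bids, w.r.t.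
her true (additive) valuation `v`: no alternative bid gives her a bundle of strictly
larger true value. -/
def BestResponse (Mech : (Fin n → Bid m) → Fin n → Finset (Fin m))
    (v : Fin m → ℝ) (b : Fin n → Bid m) (i : Fin n) : Prop :=
  ∀ b' : Bid m, value v (Mech (Function.update b i b') i) ≤ value v (Mech b i)

/-- The bid profile `b` is a pure Nash equilibrium of the mechanism `Mech` w.r.t. the
true (additive) valuations `v`. -/
def IsPNE (Mech : (Fin n → Bid m) → Fin n → Finset (Fin m))
    (v : Fin n → Fin m → ℝ) (b : Fin n → Bid m) : Prop :=
  ∀ i : Fin n, BestResponse Mech (v i) b i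

end ECE

open ECE

namespace ECE2

open ECE Finset

variable {m : ℕ}

/-- both agents envy each other -/
def eBoth (b : Fin 2 → Bid m) (P : Fin 2 → Finset (Fin m)) : Prop :=
  envies b P 0 1 ∧ envies b P 1 0

lemma envies_self (b : Fin 2 → Bid m) (P : Fin 2 → Finset (Fin m)) (i : Fin 2) :
    ¬ envies b P i i := lt_irrefl _

lemma mem_sources_iff {b : Fin 2 → Bid m} {P : Fin 2 → Finset (Fin m)} {i : Fin 2} :
    i ∈ sources b P ↔ ∀ j, ¬ envies b P j i := by
  simp [sources]

lemma zero_mem_sources {b : Fin 2 → Bid m} {P : Fin 2 → Finset (Fin m)}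
    (h : ¬ envies b P 1 0) : (0 : Fin 2) ∈ sources b P := by
  rw [mem_sources_iff]
  intro j
  fin_cases j
  · exact envies_self b P 0
  · exact h

lemma one_mem_sources {b : Fin 2 → Bid m} {P : Fin 2 → Finset (Fin m)}
    (h : ¬ envies b P 0 1) : (1 : Fin 2) ∈ sources b P := by
  rw [mem_sources_iff]
  intro j
  fin_cases j
  · exact h
  · exact envies_self b P 1

lemma sources_nonempty {b : Fin 2 → Bid m} {P : Fin 2 → Finset (Fin m)}
    (h : ¬ eBoth b P) : (sources b P).Nonempty := by
  by_cases h10 : envies b P 1 0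
  · have h01 : ¬ envies b P 0 1 := fun h01 => h ⟨h01, h10⟩
    exact ⟨1, one_mem_sources h01⟩
  · exact ⟨0, zero_mem_sources h10⟩

lemma stdAgent_eq_zero {b : Fin 2 → Bid m} {P : Fin 2 → Finset (Fin m)}
    (h : ¬ envies b P 1 0) : stdAgent b P = some 0 := by
  have h0 : (0 : Fin 2) ∈ sources b P := zero_mem_sources h
  have hne : (sources b P).Nonempty := ⟨0, h0⟩
  rw [stdAgent, dif_pos hne]
  congr 1
  exact le_antisymm (Finset.min'_le _ _ h0) (Fin.zero_le _)

lemma stdAgent_eq_one {b : Fin 2 → Bid m} {P : Fin 2 → Finset (Fin m)}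
    (h10 : envies b P 1 0) (h01 : ¬ envies b P 0 1) : stdAgent b P = some 1 := by
  have h1 : (1 : Fin 2) ∈ sources b P := one_mem_sources h01
  have hne : (sources b P).Nonempty := ⟨1, h1⟩
  rw [stdAgent, dif_pos hne]
  congr 1
  have hmem := Finset.min'_mem (sources b P) hne
  have h0 : (0 : Fin 2) ∉ sources b P := by
    rw [mem_sources_iff]
    push_neg
    exact ⟨1, h10⟩
  have : (sources b P).min' hne ≠ 0 := fun h => h0 (h ▸ hmem)
  exact Fin.eq_one_of_ne_zero _ this

lemma fin2_cases (i : Fin 2) : i = 0 ∨ i = 1 := by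
  rcases eq_or_ne i 0 with h | h
  · exact Or.inl h
  · exact Or.inr (Fin.eq_one_of_ne_zero _ h)

lemma perm_eq_swap {σ : Equiv.Perm (Fin 2)} (h0 : σ 0 ≠ 0) : σ = Equiv.swap 0 1 := by
  have h01 : σ 0 = 1 := Fin.eq_one_of_ne_zero _ h0
  have h1 : σ 1 ≠ 1 := by
    intro h
    exact absurd (σ.injective (h01.trans h.symm)) (by decide)
  have h10 : σ 1 = 0 := by
    rcases fin2_cases (σ 1) with h | h
    · exact h
    · exact absurd h h1
  ext i
  rcases fin2_cases i with rfl | rfl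
  · simp [h01]
  · simp [h10]

lemma cycleSet_of_not {b : Fin 2 → Bid m} {P : Fin 2 → Finset (Fin m)}
    (h : ¬ eBoth b P) : cycleSet b P = ∅ := by
  rw [Finset.eq_empty_iff_forall_notMem]
  intro σ hσ
  rw [cycleSet, Finset.mem_filter] at hσ
  obtain ⟨-, hc, henv⟩ := hσ
  have hne : σ ≠ 1 := hc.ne_one
  have hmove : σ 0 ≠ 0 ∨ σ 1 ≠ 1 := by
    by_contra hcon
    push_neg at hcon
    exact hne (by ext i; rcases fin2_cases i with rfl | rfl <;> simp [hcon.1, hcon.2])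
  have hswap : σ = Equiv.swap 0 1 := by
    rcases hmove with h0 | h1
    · exact perm_eq_swap h0
    · have h10 : σ 1 = 0 := by
        rcases fin2_cases (σ 1) with h | h
        · exact h
        · exact absurd h h1
      have h0 : σ 0 ≠ 0 := by
        intro h
        exact absurd (σ.injective (h.trans h10.symm)) (by decide)
      exact perm_eq_swap h0
  subst hswap
  refine h ⟨?_, ?_⟩
  · have := henv 0 (by simp)
    simpa using this
  · have := henv 1 (by simp)
    simpa using this

lemma cycleSet_of_both {b : Fin 2 → Bid m} {P : Fin 2 → Finset (Fin m)}
    (h : eBoth b P) : cycleSet b P = {Equiv.swap 0 1} := by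
  ext σ
  rw [cycleSet, Finset.mem_filter, Finset.mem_singleton]
  constructor
  · rintro ⟨-, hc, henv⟩
    have hne : σ ≠ 1 := hc.ne_one
    have hmove : σ 0 ≠ 0 ∨ σ 1 ≠ 1 := by
      by_contra hcon
      push_neg at hcon
      exact hne (by ext i; rcases fin2_cases i with rfl | rfl <;> simp [hcon.1, hcon.2])
    rcases hmove with h0 | h1
    · exact perm_eq_swap h0
    · have h10 : σ 1 = 0 := by
        rcases fin2_cases (σ 1) with h | h
        · exact h
        · exact absurd h h1
      have h0 : σ 0 ≠ 0 := by
        intro hh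
        exact absurd (σ.injective (hh.trans h10.symm)) (by decide)
      exact perm_eq_swap h0
  · rintro rfl
    refine ⟨Finset.mem_univ _, Equiv.Perm.isCycle_swap (by decide), ?_⟩
    intro i hi
    rcases fin2_cases i with rfl | rfl
    · simpa using h.1
    · simpa using h.2

lemma elimOnce_of_both {b : Fin 2 → Bid m} {P : Fin 2 → Finset (Fin m)}
    (h : eBoth b P) : elimOnce b P = fun i => P (Equiv.swap 0 1 i) := by
  have hc : cycleSet b P = {Equiv.swap 0 1} := cycleSet_of_both h
  have hne : (cycleSet b P).Nonempty := by rw [hc]; exact ⟨_, Finset.mem_singleton_self _⟩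
  rw [elimOnce, dif_pos hne]
  have : ((cycleSet b P).image (permIdx 2)).min' (hne.image _) = permIdx 2 (Equiv.swap 0 1) := by
    simp [hc]
  simp only [this, Equiv.symm_apply_apply]

lemma swap_not_eBoth {b : Fin 2 → Bid m} {P : Fin 2 → Finset (Fin m)}
    (h : envies b P 0 1) : ¬ eBoth b (fun i => P (Equiv.swap 0 1 i)) := by
  rintro ⟨h01, -⟩
  have : bval (b 0) (P 1) < bval (b 0) (P 0) := by simpa [envies] using h01
  exact absurd h (not_lt.mpr this.le)

lemma resolve_of_not {b : Fin 2 → Bid m} {P : Fin 2 → Finset (Fin m)}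
    (h : ¬ eBoth b P) (k : ℕ) : resolve b (k + 1) P = P := by
  rw [resolve, if_pos (sources_nonempty h)]

lemma resolve_five {b : Fin 2 → Bid m} (P : Fin 2 → Finset (Fin m)) :
    resolve b 5 P = if eBoth b P then (fun i => P (Equiv.swap 0 1 i)) else P := by
  by_cases h : eBoth b P
  · rw [if_pos h]
    have hemp : ¬ (sources b P).Nonempty := by
      rw [Finset.nonempty_iff_ne_empty]
      intro hne
      apply hne
      rw [Finset.eq_empty_iff_forall_notMem]
      intro i hi
      rw [mem_sources_iff] at hi
      rcases fin2_cases i with rfl | rfl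
      · exact hi 1 h.2
      · exact hi 0 h.1
    show resolve b (4 + 1) P = _
    rw [resolve, if_neg hemp, elimOnce_of_both h]
    exact resolve_of_not (swap_not_eBoth h.1) 3
  · rw [if_neg h]
    exact resolve_of_not h 4

lemma not_eBoth_resolve_five {b : Fin 2 → Bid m} (P : Fin 2 → Finset (Fin m)) :
    ¬ eBoth b (resolve b 5 P) := by
  rw [resolve_five]
  by_cases h : eBoth b P
  · rw [if_pos h]
    exact swap_not_eBoth h.1
  · rw [if_neg h]
    exact h

/-- The mechanism state sequence of Standard E-C-E. -/
noncomputable def SE (b : Fin 2 → Bid m) : ℕ → (Fin 2 → Finset (Fin m)) × Finset (Fin m) :=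
  stateECE b (stdAgent b) (fun _ R hR => R.min' hR)

lemma Standard_eq (b : Fin 2 → Bid m) : Standard b = (SE b m).1 := rfl

lemma SE_zero (b : Fin 2 → Bid m) : SE b 0 = (fun _ => ∅, Finset.univ) := rfl

lemma SE_succ {b : Fin 2 → Bid m} {k : ℕ} (hR : (SE b k).2.Nonempty) {i : Fin 2}
    (hi : stdAgent b (SE b k).1 = some i) :
    SE b (k + 1) =
      (resolve b 5 (fun j => if j = i then insert ((SE b k).2.min' hR) ((SE b k).1 j)
          else (SE b k).1 j),
        (SE b k).2.erase ((SE b k).2.min' hR)) := by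
  show stateECE b (stdAgent b) (fun _ R hR => R.min' hR) (k + 1) = _
  rw [stateECE]
  simp only [show stateECE b (stdAgent b) (fun _ R hR => R.min' hR) = SE b from rfl]
  rw [dif_pos hR, hi]

/-- one agent receives good `g` -/
def give (P : Fin 2 → Finset (Fin m)) (i : Fin 2) (g : Fin m) : Fin 2 → Finset (Fin m) :=
  fun j => if j = i then insert g (P j) else P j

lemma give_zero_zero (P : Fin 2 → Finset (Fin m)) (g : Fin m) :
    give P 0 g 0 = insert g (P 0) := by simp [give]

lemma give_zero_one (P : Fin 2 → Finset (Fin m)) (g : Fin m) :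
    give P 0 g 1 = P 1 := by simp [give]

lemma give_one_zero (P : Fin 2 → Finset (Fin m)) (g : Fin m) :
    give P 1 g 0 = P 0 := by simp [give]

lemma give_one_one (P : Fin 2 → Finset (Fin m)) (g : Fin m) :
    give P 1 g 1 = insert g (P 1) := by simp [give]

/-- Structural invariant of the Standard run. -/
lemma SE_struct (b : Fin 2 → Bid m) :
    ∀ k, k ≤ m →
      (SE b k).2 = Finset.univ.filter (fun x : Fin m => k ≤ x.val) ∧
      (SE b k).1 0 ∪ (SE b k).1 1 = Finset.univ.filter (fun x : Fin m => x.val < k) ∧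
      Disjoint ((SE b k).1 0) ((SE b k).1 1) ∧
      ¬ eBoth b (SE b k).1 := by
  intro k
  induction k with
  | zero =>
    intro _
    refine ⟨?_, ?_, ?_, ?_⟩
    · rw [SE_zero]
      ext x
      simp
    · rw [SE_zero]
      ext x
      simp
    · rw [SE_zero]
      simp
    · rw [SE_zero]
      rintro ⟨h, -⟩
      exact absurd h (lt_irrefl _)
  | succ k ih =>
    intro hk1
    have hk : k < m := hk1
    obtain ⟨hR, hU, hD, hB⟩ := ih (le_of_lt hk)
    set P := (SE b k).1 with hP
    have hg : (⟨k, hk⟩ : Fin m) ∈ (SE b k).2 := by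
      rw [hR, Finset.mem_filter]
      exact ⟨Finset.mem_univ _, le_of_eq (Fin.val_mk hk).symm⟩
    have hRne : (SE b k).2.Nonempty := ⟨_, hg⟩
    have hmin : (SE b k).2.min' hRne = ⟨k, hk⟩ := by
      refine le_antisymm (Finset.min'_le _ _ hg) ?_
      refine Finset.le_min' _ _ _ (fun y hy => ?_)
      rw [hR, Finset.mem_filter] at hy
      exact hy.2
    have hfresh0 : (⟨k, hk⟩ : Fin m) ∉ P 0 := by
      intro hmem
      have : (⟨k, hk⟩ : Fin m) ∈ P 0 ∪ P 1 := Finset.mem_union_left _ hmem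
      rw [hU, Finset.mem_filter] at this
      rw [Fin.val_mk] at this
      omega
    have hfresh1 : (⟨k, hk⟩ : Fin m) ∉ P 1 := by
      intro hmem
      have : (⟨k, hk⟩ : Fin m) ∈ P 0 ∪ P 1 := Finset.mem_union_right _ hmem
      rw [hU, Finset.mem_filter] at this
      rw [Fin.val_mk] at this
      omega
    -- the recipient
    obtain ⟨i, hi⟩ : ∃ i : Fin 2, stdAgent b P = some i := by
      by_cases h10 : envies b P 1 0
      · exact ⟨1, stdAgent_eq_one h10 (fun h01 => hB ⟨h01, h10⟩)⟩
      · exact ⟨0, stdAgent_eq_zero h10⟩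
    have hstep := SE_succ hRne hi
    rw [hmin] at hstep
    have hR' : (SE b (k+1)).2 = Finset.univ.filter (fun x : Fin m => k + 1 ≤ x.val) := by
      rw [hstep, hR]
      ext x
      simp only [Finset.mem_erase, Finset.mem_filter, Finset.mem_univ, true_and,
        Ne, Fin.ext_iff, Fin.val_mk]
      omega
    have hgive_union : give P i ⟨k, hk⟩ 0 ∪ give P i ⟨k, hk⟩ 1 = insert ⟨k, hk⟩ (P 0 ∪ P 1) := by
      rcases fin2_cases i with rfl | rfl
      · rw [give_zero_zero, give_zero_one, Finset.insert_union]
      · rw [give_one_zero, give_one_one, Finset.union_insert]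
    have hgive_disj : Disjoint (give P i ⟨k, hk⟩ 0) (give P i ⟨k, hk⟩ 1) := by
      rcases fin2_cases i with rfl | rfl
      · rw [give_zero_zero, give_zero_one, Finset.disjoint_insert_left]
        exact ⟨hfresh1, hD⟩
      · rw [give_one_zero, give_one_one, Finset.disjoint_insert_right]
        exact ⟨hfresh0, hD⟩
    have hP' : (SE b (k+1)).1 = resolve b 5 (give P i ⟨k, hk⟩) := by
      rw [hstep]
      rfl
    have hU' : (SE b (k+1)).1 0 ∪ (SE b (k+1)).1 1
        = Finset.univ.filter (fun x : Fin m => x.val < k + 1) := by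
      have hins : insert (⟨k, hk⟩ : Fin m) (P 0 ∪ P 1)
          = Finset.univ.filter (fun x : Fin m => x.val < k + 1) := by
        rw [hU]
        ext x
        simp only [Finset.mem_insert, Finset.mem_filter, Finset.mem_univ, true_and,
          Fin.ext_iff, Fin.val_mk]
        omega
      rw [hP', resolve_five]
      by_cases hb : eBoth b (give P i ⟨k, hk⟩)
      · rw [if_pos hb]
        simp only [Equiv.swap_apply_left, Equiv.swap_apply_right]
        rw [Finset.union_comm, hgive_union, hins]
      · rw [if_neg hb, hgive_union, hins]
    have hD' : Disjoint ((SE b (k+1)).1 0) ((SE b (k+1)).1 1) := by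
      rw [hP', resolve_five]
      by_cases hb : eBoth b (give P i ⟨k, hk⟩)
      · rw [if_pos hb]
        simp only [Equiv.swap_apply_left, Equiv.swap_apply_right]
        exact hgive_disj.symm
      · rw [if_neg hb]
        exact hgive_disj
    have hB' : ¬ eBoth b (SE b (k+1)).1 := by
      rw [hP']
      exact not_eBoth_resolve_five _
    exact ⟨hR', hU', hD', hB'⟩

/-- The step description: who receives the next good. -/
lemma SE_step {b : Fin 2 → Bid m} {k : ℕ} (hk : k < m) :
    (¬ envies b (SE b k).1 1 0 ∧
      (SE b (k+1)).1 = resolve b 5 (give (SE b k).1 0 ⟨k, hk⟩)) ∨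
    (envies b (SE b k).1 1 0 ∧ ¬ envies b (SE b k).1 0 1 ∧
      (SE b (k+1)).1 = resolve b 5 (give (SE b k).1 1 ⟨k, hk⟩)) := by
  obtain ⟨hR, hU, hD, hB⟩ := SE_struct b k (le_of_lt hk)
  have hg : (⟨k, hk⟩ : Fin m) ∈ (SE b k).2 := by
    rw [hR, Finset.mem_filter]
    exact ⟨Finset.mem_univ _, le_of_eq (Fin.val_mk hk).symm⟩
  have hRne : (SE b k).2.Nonempty := ⟨_, hg⟩
  have hmin : (SE b k).2.min' hRne = ⟨k, hk⟩ := by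
    refine le_antisymm (Finset.min'_le _ _ hg) ?_
    refine Finset.le_min' _ _ _ (fun y hy => ?_)
    rw [hR, Finset.mem_filter] at hy
    exact hy.2
  by_cases h10 : envies b (SE b k).1 1 0
  · have h01 : ¬ envies b (SE b k).1 0 1 := fun h01 => hB ⟨h01, h10⟩
    have hstep := SE_succ hRne (stdAgent_eq_one h10 h01)
    rw [hmin] at hstep
    refine Or.inr ⟨h10, h01, ?_⟩
    rw [hstep]
    rfl
  · have hstep := SE_succ hRne (stdAgent_eq_zero h10)
    rw [hmin] at hstep
    refine Or.inl ⟨h10, ?_⟩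
    rw [hstep]
    rfl

/-- Unary bid. -/
noncomputable def Ubid (m : ℕ) : Bid m :=
  ⟨fun _ => 1, fun _ => zero_le_one, Equiv.refl _⟩

/-- The special bid with value `2^m + 2^g` on good `g`. -/
noncomputable def Wbid (m : ℕ) : Bid m :=
  ⟨fun g => 2 ^ m + 2 ^ (g : ℕ), fun g => by positivity, Equiv.refl _⟩

lemma envies_iff {b : Fin 2 → Bid m} {P : Fin 2 → Finset (Fin m)} {i j : Fin 2} :
    envies b P i j ↔ bval (b i) (P i) < bval (b i) (P j) := Iff.rfl

lemma bval_U (S : Finset (Fin m)) : bval (Ubid m) S = (S.card : ℝ) := by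
  simp [bval, Ubid]

lemma bval_W (S : Finset (Fin m)) :
    bval (Wbid m) S = (S.card : ℝ) * 2 ^ m + ∑ g ∈ S, (2 : ℝ) ^ (g : ℕ) := by
  simp only [bval, Wbid]
  rw [Finset.sum_add_distrib, Finset.sum_const, nsmul_eq_mul]

lemma dev_nonneg (S : Finset (Fin m)) : (0 : ℝ) ≤ ∑ g ∈ S, (2 : ℝ) ^ (g : ℕ) :=
  Finset.sum_nonneg fun _ _ => by positivity

lemma dev_lt {k : ℕ} {S : Finset (Fin m)} (hS : ∀ x ∈ S, x.val < k) :
    ∑ g ∈ S, (2 : ℝ) ^ (g : ℕ) < 2 ^ k := by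
  have h1 : ∑ g ∈ S, (2 : ℝ) ^ (g : ℕ) = ∑ i ∈ S.image Fin.val, (2 : ℝ) ^ i := by
    rw [Finset.sum_image]
    intro x _ y _ h
    exact Fin.val_injective h
  have h2 : S.image Fin.val ⊆ Finset.range k := by
    intro i hi
    rw [Finset.mem_image] at hi
    obtain ⟨x, hx, rfl⟩ := hi
    exact Finset.mem_range.mpr (hS x hx)
  have h3 : ∑ i ∈ S.image Fin.val, (2 : ℝ) ^ i ≤ ∑ i ∈ Finset.range k, (2 : ℝ) ^ i :=
    Finset.sum_le_sum_of_subset_of_nonneg h2 (fun _ _ _ => by positivity)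
  have h4 : ∑ i ∈ Finset.range k, (2 : ℝ) ^ i = 2 ^ k - 1 := by
    rw [geom_sum_eq (by norm_num)]
    norm_num
  rw [h1]
  rw [h4] at h3
  linarith

lemma W_lt_of_card_lt {A B : Finset (Fin m)} (h : B.card < A.card) :
    bval (Wbid m) B < bval (Wbid m) A := by
  rw [bval_W, bval_W]
  have hdB : ∑ g ∈ B, (2 : ℝ) ^ (g : ℕ) < 2 ^ m := dev_lt (fun x _ => x.isLt)
  have hdA : (0 : ℝ) ≤ ∑ g ∈ A, (2 : ℝ) ^ (g : ℕ) := dev_nonneg A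
  have hc : (B.card : ℝ) + 1 ≤ (A.card : ℝ) := by exact_mod_cast h
  have hpow : (0 : ℝ) < 2 ^ m := by positivity
  nlinarith

lemma W_tight {k : ℕ} (hk : k < m) {A B : Finset (Fin m)}
    (hA : ∀ x ∈ A, x.val < k) (hcard : A.card = B.card + 1)
    (hgB : (⟨k, hk⟩ : Fin m) ∉ B) :
    bval (Wbid m) A < bval (Wbid m) (insert ⟨k, hk⟩ B) := by
  rw [bval_W, bval_W]
  rw [Finset.card_insert_of_notMem hgB, Finset.sum_insert hgB]
  have hdA : ∑ g ∈ A, (2 : ℝ) ^ (g : ℕ) < 2 ^ k := dev_lt hA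
  have hdB : (0 : ℝ) ≤ ∑ g ∈ B, (2 : ℝ) ^ (g : ℕ) := dev_nonneg B
  have : ((⟨k, hk⟩ : Fin m) : ℕ) = k := rfl
  rw [this, hcard]
  push_cast
  linarith

lemma prefix_card {k : ℕ} (hk : k ≤ m) :
    (Finset.univ.filter (fun x : Fin m => x.val < k)).card = k := by
  induction k with
  | zero => simp
  | succ k ih =>
    have hkm : k < m := hk
    have : Finset.univ.filter (fun x : Fin m => x.val < k + 1)
        = insert (⟨k, hkm⟩ : Fin m) (Finset.univ.filter (fun x : Fin m => x.val < k)) := by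
      ext x
      simp only [Finset.mem_filter, Finset.mem_univ, true_and, Finset.mem_insert,
        Fin.ext_iff, Fin.val_mk]
      omega
    rw [this, Finset.card_insert_of_notMem (by simp), ih (le_of_lt hkm)]

lemma SE_fresh {b : Fin 2 → Bid m} {k : ℕ} (hk : k < m) :
    (⟨k, hk⟩ : Fin m) ∉ (SE b k).1 0 ∧ (⟨k, hk⟩ : Fin m) ∉ (SE b k).1 1 := by
  obtain ⟨-, hU, -, -⟩ := SE_struct b k (le_of_lt hk)
  constructor
  · intro hmem
    have : (⟨k, hk⟩ : Fin m) ∈ (SE b k).1 0 ∪ (SE b k).1 1 := Finset.mem_union_left _ hmem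
    rw [hU, Finset.mem_filter, Fin.val_mk] at this
    omega
  · intro hmem
    have : (⟨k, hk⟩ : Fin m) ∈ (SE b k).1 0 ∪ (SE b k).1 1 := Finset.mem_union_right _ hmem
    rw [hU, Finset.mem_filter, Fin.val_mk] at this
    omega

lemma SE_card_sum {b : Fin 2 → Bid m} {k : ℕ} (hk : k ≤ m) :
    ((SE b k).1 0).card + ((SE b k).1 1).card = k := by
  obtain ⟨-, hU, hD, -⟩ := SE_struct b k hk
  rw [← Finset.card_union_of_disjoint hD, hU, prefix_card hk]

/-- Deviation bound for agent 0 against the unary bid of agent 1. -/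
lemma boundB (b : Fin 2 → Bid m) (hb : b 1 = Ubid m) :
    ∀ k, k ≤ m → ((SE b k).1 0).card ≤ ((SE b k).1 1).card + 1 := by
  intro k
  induction k with
  | zero =>
    intro _
    rw [SE_zero]
    simp
  | succ k ih =>
    intro hk1
    have hk : k < m := hk1
    have IH := ih (le_of_lt hk)
    obtain ⟨hf0, hf1⟩ := SE_fresh (b := b) hk
    set P := (SE b k).1 with hP
    have hcard1 : (insert (⟨k, hk⟩ : Fin m) (P 1)).card = (P 1).card + 1 :=
      Finset.card_insert_of_notMem hf1
    have hcard0 : (insert (⟨k, hk⟩ : Fin m) (P 0)).card = (P 0).card + 1 :=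
      Finset.card_insert_of_notMem hf0
    rcases SE_step (b := b) hk with ⟨h10, hstep⟩ | ⟨h10, h01, hstep⟩
    · -- agent 0 receives
      rw [← hP] at hstep h10
      have hc : (P 0).card ≤ (P 1).card := by
        rw [envies_iff, hb, bval_U, bval_U] at h10
        exact_mod_cast not_lt.mp h10
      rw [hstep, resolve_five]
      by_cases hbE : eBoth b (give P 0 ⟨k, hk⟩)
      · -- swap happens
        have h2 := hbE.2
        rw [envies_iff, hb, bval_U, bval_U, give_zero_one, give_zero_zero, hcard0] at h2
        have hcc : (P 1).card < (P 0).card + 1 := by exact_mod_cast h2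
        rw [if_pos hbE]
        simp only [Equiv.swap_apply_left, Equiv.swap_apply_right]
        rw [give_zero_one, give_zero_zero, hcard0]
        omega
      · rw [if_neg hbE]
        rw [give_zero_zero, give_zero_one, hcard0]
        omega
    · -- agent 1 receives
      rw [← hP] at hstep h10 h01
      have hc : (P 1).card < (P 0).card := by
        rw [envies_iff, hb, bval_U, bval_U] at h10
        exact_mod_cast h10
      have hbE : ¬ eBoth b (give P 1 ⟨k, hk⟩) := by
        rintro ⟨-, h2⟩
        rw [envies_iff, hb, bval_U, bval_U, give_one_one, give_one_zero, hcard1] at h2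
        have : (P 1).card + 1 < (P 0).card := by exact_mod_cast h2
        omega
      rw [hstep, resolve_five, if_neg hbE, give_one_zero, give_one_one, hcard1]
      omega

/-- Deviation bound for agent 1 against the special bid of agent 0. -/
lemma boundC (b : Fin 2 → Bid m) (hb : b 0 = Wbid m) :
    ∀ k, k ≤ m → 2 * ((SE b k).1 1).card ≤ k ∧
      (2 * ((SE b k).1 1).card = k →
        (envies b (SE b k).1 0 1 ∨ ¬ envies b (SE b k).1 1 0)) := by
  intro k
  induction k with
  | zero =>
    intro _
    rw [SE_zero]
    refine ⟨by simp, fun _ => Or.inr ?_⟩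
    rw [envies_iff]
    exact lt_irrefl _
  | succ k ih =>
    intro hk1
    have hk : k < m := hk1
    obtain ⟨IH1, IH2⟩ := ih (le_of_lt hk)
    obtain ⟨hf0, hf1⟩ := SE_fresh (b := b) hk
    obtain ⟨-, hU, -, -⟩ := SE_struct b k (le_of_lt hk)
    have hsum := SE_card_sum (b := b) (le_of_lt hk)
    set P := (SE b k).1 with hP
    have hcard1 : (insert (⟨k, hk⟩ : Fin m) (P 1)).card = (P 1).card + 1 :=
      Finset.card_insert_of_notMem hf1
    have hcard0 : (insert (⟨k, hk⟩ : Fin m) (P 0)).card = (P 0).card + 1 :=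
      Finset.card_insert_of_notMem hf0
    rcases SE_step (b := b) hk with ⟨h10, hstep⟩ | ⟨h10, h01, hstep⟩
    · -- agent 0 receives
      rw [← hP] at hstep h10
      have hbE : ¬ eBoth b (give P 0 ⟨k, hk⟩) := by
        rintro ⟨h1, -⟩
        rw [envies_iff, hb, give_zero_zero, give_zero_one] at h1
        have : bval (Wbid m) (P 1) < bval (Wbid m) (insert ⟨k, hk⟩ (P 0)) := by
          apply W_lt_of_card_lt
          rw [hcard0]
          omega
        exact absurd h1 (not_lt.mpr this.le)
      rw [hstep, resolve_five, if_neg hbE]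
      rw [give_zero_one]
      exact ⟨by omega, fun htight => by omega⟩
    · -- agent 1 receives
      rw [← hP] at hstep h10 h01
      have hnt : 2 * (P 1).card < k := by
        rcases Nat.lt_or_ge (2 * (P 1).card) k with h | h
        · exact h
        · have heq : 2 * (P 1).card = k := by omega
          rcases IH2 heq with hcase | hcase
          · exact absurd hcase h01
          · exact absurd h10 hcase
      by_cases hbE : eBoth b (give P 1 ⟨k, hk⟩)
      · -- swap happens; this forces the bundles to have become equal in size
        have h1 := hbE.1
        rw [envies_iff, hb, give_one_zero, give_one_one] at h1
        have heqc : (P 0).card = (P 1).card + 1 := by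
          rcases Nat.lt_or_ge ((P 1).card + 1) ((P 0).card) with hlt | hge
          · exfalso
            have : bval (Wbid m) (insert ⟨k, hk⟩ (P 1)) < bval (Wbid m) (P 0) := by
              apply W_lt_of_card_lt
              rw [hcard1]
              exact hlt
            exact absurd h1 (not_lt.mpr this.le)
          · omega
        rw [hstep, resolve_five, if_pos hbE]
        refine ⟨?_, fun _ => Or.inr ?_⟩
        · simp only [Equiv.swap_apply_right]
          rw [give_one_zero]
          omega
        -- after the swap agent 1 cannot envy (consistency of her additive bid)
        · have h2 := hbE.2
          rw [envies_iff, give_one_one, give_one_zero] at h2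
          rw [envies_iff]
          simp only [Equiv.swap_apply_left, Equiv.swap_apply_right]
          rw [give_one_zero, give_one_one]
          exact not_lt.mpr h2.le
      · rw [hstep, resolve_five, if_neg hbE]
        refine ⟨by rw [give_one_one, hcard1]; omega, ?_⟩
        intro htight
        rw [give_one_one, hcard1] at htight
        -- tight: the bundles have become equal in size, agent 0 (with W bid) envies
        left
        rw [envies_iff, hb, give_one_zero, give_one_one]
        apply W_tight hk
        · intro x hx
          have : x ∈ P 0 ∪ P 1 := Finset.mem_union_left _ hx
          rw [hU, Finset.mem_filter] at this
          exact this.2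
        · omega
        · exact hf1

/-- The equilibrium bid profile. -/
noncomputable def beq (m : ℕ) : Fin 2 → Bid m := fun i => if i = 0 then Wbid m else Ubid m

lemma beq_zero : beq m 0 = Wbid m := if_pos rfl

lemma beq_one : beq m 1 = Ubid m := if_neg (by decide)

lemma value_card (S : Finset (Fin m)) : value (fun _ => (1 : ℝ)) S = (S.card : ℝ) := by
  simp [value]

end ECE2

/-- For two agents with unary additive true valuations (over any
number `m` of goods), Standard-E-C-E always has a pure Nash equilibrium whose induced
allocation is EF1 with respect to the true valuations. -/
theorem standard_two_unary_PNE_exists (m : ℕ) :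
    ∃ b : Fin 2 → Bid m,
      IsPNE Standard (fun _ _ => (1 : ℝ)) b ∧
      IsEF1 (fun _ _ => (1 : ℝ)) (Standard b) := by
  classical
  refine ⟨ECE2.beq m, ?_, ?_⟩
  · -- PNE
    have hsum : ((ECE2.SE (ECE2.beq m) m).1 0).card + ((ECE2.SE (ECE2.beq m) m).1 1).card = m :=
      ECE2.SE_card_sum le_rfl
    have hb1 : 2 * ((ECE2.SE (ECE2.beq m) m).1 1).card ≤ m :=
      (ECE2.boundC (ECE2.beq m) ECE2.beq_zero m le_rfl).1
    have hb0 : ((ECE2.SE (ECE2.beq m) m).1 0).card ≤ ((ECE2.SE (ECE2.beq m) m).1 1).card + 1 :=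
      ECE2.boundB (ECE2.beq m) ECE2.beq_one m le_rfl
    intro i
    rcases ECE2.fin2_cases i with rfl | rfl
    · intro b'
      set c : Fin 2 → Bid m := Function.update (ECE2.beq m) 0 b' with hc
      have hc1 : c 1 = ECE2.Ubid m := by
        rw [hc, Function.update_of_ne (by decide), ECE2.beq_one]
      have hcb : ((ECE2.SE c m).1 0).card ≤ ((ECE2.SE c m).1 1).card + 1 :=
        ECE2.boundB c hc1 m le_rfl
      have hcsum : ((ECE2.SE c m).1 0).card + ((ECE2.SE c m).1 1).card = m :=
        ECE2.SE_card_sum le_rfl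
      have hfin : ((ECE2.SE c m).1 0).card ≤ ((ECE2.SE (ECE2.beq m) m).1 0).card := by omega
      rw [ECE2.Standard_eq, ECE2.Standard_eq, ECE2.value_card, ECE2.value_card]
      exact_mod_cast hfin
    · intro b'
      set c : Fin 2 → Bid m := Function.update (ECE2.beq m) 1 b' with hc
      have hc0 : c 0 = ECE2.Wbid m := by
        rw [hc, Function.update_of_ne (by decide), ECE2.beq_zero]
      have hcb : 2 * ((ECE2.SE c m).1 1).card ≤ m :=
        (ECE2.boundC c hc0 m le_rfl).1
      have hfin : ((ECE2.SE c m).1 1).card ≤ ((ECE2.SE (ECE2.beq m) m).1 1).card := by omega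
      rw [ECE2.Standard_eq, ECE2.Standard_eq, ECE2.value_card, ECE2.value_card]
      exact_mod_cast hfin
  · -- EF1
    have hsum : ((ECE2.SE (ECE2.beq m) m).1 0).card + ((ECE2.SE (ECE2.beq m) m).1 1).card = m :=
      ECE2.SE_card_sum le_rfl
    have hb1 : 2 * ((ECE2.SE (ECE2.beq m) m).1 1).card ≤ m :=
      (ECE2.boundC (ECE2.beq m) ECE2.beq_zero m le_rfl).1
    have hb0 : ((ECE2.SE (ECE2.beq m) m).1 0).card ≤ ((ECE2.SE (ECE2.beq m) m).1 1).card + 1 :=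
      ECE2.boundB (ECE2.beq m) ECE2.beq_one m le_rfl
    intro i j hj
    obtain ⟨g, hg⟩ := hj
    refine ⟨g, hg, ?_⟩
    rw [one_mul, ECE2.value_card, ECE2.value_card, Finset.card_erase_of_mem hg]
    have hcard : (Standard (ECE2.beq m) j).card - 1 ≤ (Standard (ECE2.beq m) i).card := by
      rw [ECE2.Standard_eq]
      rcases ECE2.fin2_cases i with rfl | rfl <;> rcases ECE2.fin2_cases j with rfl | rfl <;>
        omega
    exact_mod_cast hcard
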